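/- Let P ⊂ ℝ² be an open bounded convex polygon with metric d = ∑_i w_i d_{θ_i} as above, where Θ contains the direction of every side of P. Let v be a point in the relative interior of a side of P, x ∈ P, and (y_n) a sequence on the Euclidean segment [x,v] converging to v. Then d(x, y_n) → ∞. -/

import Mathlib

/-- Projection of a point of the plane onto the direction `(cos θ, sin θ)`. -/
noncomputable def projDir (θ : ℝ) (p : ℝ × ℝ) : ℝ := p.1 * Real.cos θ + p.2 * Real.sin θ

/-- Lower bound of the minimal strip containing `P` in direction `θ`. -/
noncomputable def stripXi (θ : ℝ) (P : Set (ℝ × ℝ)) : ℝ := sInf (projDir θ '' P)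

/-- Upper bound of the minimal strip containing `P` in direction `θ`. -/
noncomputable def stripEta (θ : ℝ) (P : Set (ℝ × ℝ)) : ℝ := sSup (projDir θ '' P)

/-- The strip cross-ratio pseudo-metric `d_θ` on `P`. -/
noncomputable def stripD (θ : ℝ) (P : Set (ℝ × ℝ)) (x y : ℝ × ℝ) : ℝ :=
  |Real.log (((projDir θ y - stripXi θ P) * (stripEta θ P - projDir θ x)) /
    ((projDir θ x - stripXi θ P) * (stripEta θ P - projDir θ y)))|

lemma projDir_bound (θ : ℝ) (p : ℝ × ℝ) : |projDir θ p| ≤ 2 * ‖p‖ := by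
  have h1 : |p.1| ≤ ‖p‖ := (Real.norm_eq_abs _) ▸ norm_fst_le p
  have h2 : |p.2| ≤ ‖p‖ := (Real.norm_eq_abs _) ▸ norm_snd_le p
  have hc : |Real.cos θ| ≤ 1 := Real.abs_cos_le_one θ
  have hs : |Real.sin θ| ≤ 1 := Real.abs_sin_le_one θ
  have := abs_add_le (p.1 * Real.cos θ) (p.2 * Real.sin θ)
  rw [abs_mul, abs_mul] at this
  unfold projDir
  nlinarith [abs_nonneg p.1, abs_nonneg p.2, abs_nonneg (Real.cos θ), abs_nonneg (Real.sin θ)]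

lemma strip_abs_le {P : Set (ℝ × ℝ)} {R : ℝ} (hR : P ⊆ Metric.closedBall 0 R) (θ : ℝ) :
    ∀ z ∈ projDir θ '' P, |z| ≤ 2 * R := by
  rintro z ⟨a, ha, rfl⟩
  have hna : ‖a‖ ≤ R := by simpa using hR ha
  have := projDir_bound θ a
  linarith

lemma strip_bddBelow {P : Set (ℝ × ℝ)} (hPb : Bornology.IsBounded P) (θ : ℝ) :
    BddBelow (projDir θ '' P) := by
  obtain ⟨R, hR⟩ := hPb.subset_closedBall 0
  exact ⟨-(2 * R), fun z hz => neg_le_of_abs_le (strip_abs_le hR θ z hz)⟩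

lemma strip_bddAbove {P : Set (ℝ × ℝ)} (hPb : Bornology.IsBounded P) (θ : ℝ) :
    BddAbove (projDir θ '' P) := by
  obtain ⟨R, hR⟩ := hPb.subset_closedBall 0
  exact ⟨2 * R, fun z hz => le_of_abs_le (strip_abs_le hR θ z hz)⟩

lemma strip_mem {P : Set (ℝ × ℝ)} (hPb : Bornology.IsBounded P) (θ : ℝ) {p : ℝ × ℝ}
    (hp : p ∈ P) : stripXi θ P ≤ projDir θ p ∧ projDir θ p ≤ stripEta θ P :=
  ⟨csInf_le (strip_bddBelow hPb θ) ⟨p, hp, rfl⟩,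
   le_csSup (strip_bddAbove hPb θ) ⟨p, hp, rfl⟩⟩

lemma strip_gap {P : Set (ℝ × ℝ)} (hPb : Bornology.IsBounded P) (θ : ℝ) {p : ℝ × ℝ} {ε : ℝ}
    (hε : 0 < ε) (hball : Metric.ball p ε ⊆ P) :
    stripXi θ P ≤ projDir θ p - ε / 2 ∧ projDir θ p + ε / 2 ≤ stripEta θ P := by
  set u : ℝ × ℝ := (Real.cos θ, Real.sin θ) with hu
  have hnu : ‖u‖ ≤ 1 := by
    rw [Prod.norm_def]
    simp only [Real.norm_eq_abs]
    exact max_le (Real.abs_cos_le_one θ) (Real.abs_sin_le_one θ)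
  have hmem : ∀ c : ℝ, |c| ≤ ε / 2 → p + c • u ∈ P := by
    intro c hc
    apply hball
    rw [Metric.mem_ball]
    have : dist (p + c • u) p = ‖c • u‖ := by
      rw [dist_eq_norm]; congr 1; abel
    rw [this, norm_smul, Real.norm_eq_abs]
    calc |c| * ‖u‖ ≤ (ε / 2) * 1 := by
          apply mul_le_mul hc hnu (norm_nonneg _) (by linarith)
      _ < ε := by linarith
  have hproj : ∀ c : ℝ, projDir θ (p + c • u) = projDir θ p + c := by
    intro c
    have h1 := Real.cos_sq_add_sin_sq θ
    simp only [projDir, hu, Prod.fst_add, Prod.snd_add, Prod.smul_fst, Prod.smul_snd,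
      smul_eq_mul]
    linear_combination c * h1
  constructor
  · have h := (strip_mem hPb θ (hmem (-(ε / 2)) (by rw [abs_neg, abs_of_pos (by linarith)]))).1
    rw [hproj] at h
    linarith
  · have h := (strip_mem hPb θ (hmem (ε / 2) (by rw [abs_of_pos (by linarith)]))).2
    rw [hproj] at h
    linarith

lemma strip_strict {P : Set (ℝ × ℝ)} (hPo : IsOpen P) (hPb : Bornology.IsBounded P) (θ : ℝ)
    {p : ℝ × ℝ} (hp : p ∈ P) :
    stripXi θ P < projDir θ p ∧ projDir θ p < stripEta θ P := by
  obtain ⟨ε, hε, hball⟩ := Metric.isOpen_iff.mp hPo p hp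
  have := strip_gap hPb θ hε hball
  constructor <;> linarith [this.1, this.2]

lemma projDir_openSegment {θ : ℝ} {A B v : ℝ × ℝ} (hv : v ∈ openSegment ℝ A B)
    (hAB : projDir θ A = projDir θ B) : projDir θ v = projDir θ A := by
  obtain ⟨a, b, ha, hb, hab, rfl⟩ := hv
  simp only [projDir, Prod.fst_add, Prod.snd_add, Prod.smul_fst, Prod.smul_snd,
    smul_eq_mul] at hAB ⊢
  linear_combination (-b) * hAB + (A.1 * Real.cos θ + A.2 * Real.sin θ) * hab

lemma tend_aux {ξ η p : ℝ} (q : ℕ → ℝ) (hξp : ξ < p) (hpη : p < η)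
    (hq1 : ∀ n, ξ < q n) (hq2 : ∀ n, q n < η)
    (hlim : Filter.Tendsto q Filter.atTop (nhds ξ)) :
    Filter.Tendsto (fun n => |Real.log (((q n - ξ) * (η - p)) / ((p - ξ) * (η - q n)))|)
      Filter.atTop Filter.atTop := by
  set r : ℕ → ℝ := fun n => ((q n - ξ) * (η - p)) / ((p - ξ) * (η - q n)) with hr
  have hrpos : ∀ n, 0 < r n := fun n => by
    apply div_pos (mul_pos (by linarith [hq1 n]) (by linarith))
      (mul_pos (by linarith) (by linarith [hq2 n]))
  have hnum : Filter.Tendsto (fun n => (q n - ξ) * (η - p)) Filter.atTop (nhds 0) := by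
    have : Filter.Tendsto (fun n => q n - ξ) Filter.atTop (nhds (ξ - ξ)) :=
      hlim.sub_const ξ
    simpa using this.mul_const (η - p)
  have hden : Filter.Tendsto (fun n => (p - ξ) * (η - q n)) Filter.atTop
      (nhds ((p - ξ) * (η - ξ))) := by
    exact (tendsto_const_nhds.sub hlim).const_mul (p - ξ)
  have hdne : (p - ξ) * (η - ξ) ≠ 0 :=
    ne_of_gt (mul_pos (by linarith) (by linarith))
  have hr0 : Filter.Tendsto r Filter.atTop (nhds 0) := by
    have := hnum.div hden hdne
    rw [zero_div] at this
    exact this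
  have hr0' : Filter.Tendsto r Filter.atTop (nhdsWithin 0 (Set.Ioi 0)) :=
    tendsto_nhdsWithin_of_tendsto_nhds_of_eventually_within r hr0
      (Filter.Eventually.of_forall fun n => hrpos n)
  exact Filter.Tendsto.comp Filter.tendsto_abs_atBot_atTop (Real.tendsto_log_nhdsGT_zero.comp hr0')


lemma tend_aux' {ξ η p : ℝ} (q : ℕ → ℝ) (hξp : ξ < p) (hpη : p < η)
    (hq1 : ∀ n, ξ < q n) (hq2 : ∀ n, q n < η)
    (hlim : Filter.Tendsto q Filter.atTop (nhds η)) :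
    Filter.Tendsto (fun n => |Real.log (((q n - ξ) * (η - p)) / ((p - ξ) * (η - q n)))|)
      Filter.atTop Filter.atTop := by
  have h := tend_aux (fun n => -q n) (neg_lt_neg hpη) (neg_lt_neg hξp)
    (fun n => neg_lt_neg (hq2 n)) (fun n => neg_lt_neg (hq1 n)) hlim.neg
  refine h.congr fun n => ?_
  have hne1 : (-p - -η) * (-ξ - -q n) ≠ 0 :=
    ne_of_gt (mul_pos (by linarith) (by linarith [hq1 n]))
  have hne2 : (q n - ξ) * (η - p) ≠ 0 :=
    ne_of_gt (mul_pos (by linarith [hq1 n]) (by linarith))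
  have heq : ((-q n - -η) * (-ξ - -p)) / ((-p - -η) * (-ξ - -q n)) =
      (((q n - ξ) * (η - p)) / ((p - ξ) * (η - q n)))⁻¹ := by
    rw [inv_div, div_eq_div_iff hne1 hne2]
    ring
  simp only [heq, Real.log_inv, abs_neg]

set_option maxHeartbeats 1000000 in
theorem stmt_15 (P : Set (ℝ × ℝ)) (hPo : IsOpen P) (hPb : Bornology.IsBounded P)
    (hPconv : Convex ℝ P) (hPne : P.Nonempty)
    (θi : ℕ → ℝ) (w : ℕ → ℝ) (hw : ∀ i, 0 < w i) (hsum : Summable w)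
    (v : ℝ × ℝ) (A B : ℝ × ℝ) (hAB : A ≠ B)
    (hside : segment ℝ A B ⊆ frontier P) (hv : v ∈ openSegment ℝ A B)
    -- Θ contains the direction normal to the side through `v`: for some `i`,
    -- the side lies on a supporting line of the strip in direction `θi i`.
    (hi : ∃ i, projDir (θi i) A = projDir (θi i) B ∧
      (projDir (θi i) A = stripXi (θi i) P ∨ projDir (θi i) A = stripEta (θi i) P))
    (x : ℝ × ℝ) (hx : x ∈ P)
    (y : ℕ → ℝ × ℝ) (hyP : ∀ n, y n ∈ P) (hyseg : ∀ n, y n ∈ segment ℝ x v)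
    (hyl : Filter.Tendsto y Filter.atTop (nhds v)) :
    Filter.Tendsto (fun n => ∑' i, w i * stripD (θi i) P x (y n))
      Filter.atTop Filter.atTop := by
  obtain ⟨i0, hABeq, hcase⟩ := hi
  obtain ⟨R, hRsub⟩ := hPb.subset_closedBall 0
  obtain ⟨εx, hεx, hbx⟩ := Metric.isOpen_iff.mp hPo x hx
  -- Summability with a uniform bound
  have hsummable : ∀ n, Summable (fun i => w i * stripD (θi i) P x (y n)) := by
    intro n
    obtain ⟨εy, hεy, hby⟩ := Metric.isOpen_iff.mp hPo (y n) (hyP n)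
    set ε := min εx εy with hε
    have hεpos : 0 < ε := lt_min hεx hεy
    have hbx' : Metric.ball x ε ⊆ P :=
      (Metric.ball_subset_ball (min_le_left _ _)).trans hbx
    have hby' : Metric.ball (y n) ε ⊆ P :=
      (Metric.ball_subset_ball (min_le_right _ _)).trans hby
    set m := ε / 2 with hm
    have hmpos : 0 < m := by positivity
    set M := 4 * R with hM
    have hbound : ∀ i, stripD (θi i) P x (y n) ≤ Real.log ((M * M) / (m * m)) := by
      intro i
      have hgx := strip_gap hPb (θi i) hεpos hbx'
      have hgy := strip_gap hPb (θi i) hεpos hby'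
      have hmemx := strip_mem hPb (θi i) hx
      have hmemy := strip_mem hPb (θi i) (hyP n)
      set ξ := stripXi (θi i) P
      set η := stripEta (θi i) P
      set px := projDir (θi i) x
      set qy := projDir (θi i) (y n)
      have hξR : -(2 * R) ≤ ξ :=
        le_csInf ⟨px, ⟨x, hx, rfl⟩⟩ fun z hz => neg_le_of_abs_le (strip_abs_le hRsub (θi i) z hz)
      have hηR : η ≤ 2 * R :=
        csSup_le ⟨px, ⟨x, hx, rfl⟩⟩ fun z hz => le_of_abs_le (strip_abs_le hRsub (θi i) z hz)
      have h1 : m ≤ qy - ξ := by linarith [hgy.1]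
      have h2 : m ≤ η - px := by linarith [hgx.2]
      have h3 : m ≤ px - ξ := by linarith [hgx.1]
      have h4 : m ≤ η - qy := by linarith [hgy.2]
      have hM1 : qy - ξ ≤ M := by linarith [hmemy.2, hmemy.1]
      have hM2 : η - px ≤ M := by linarith [hmemx.1]
      have hM3 : px - ξ ≤ M := by linarith [hmemx.2]
      have hM4 : η - qy ≤ M := by linarith [hmemy.1]
      have hMpos : 0 < M := lt_of_lt_of_le hmpos (le_trans h1 hM1)
      set r := ((qy - ξ) * (η - px)) / ((px - ξ) * (η - qy)) with hr
      have hrpos : 0 < r := by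
        apply div_pos (mul_pos (by linarith) (by linarith))
          (mul_pos (by linarith) (by linarith))
      have hrle : r ≤ (M * M) / (m * m) := by
        rw [hr]
        exact div_le_div₀ (mul_pos hMpos hMpos).le
          (mul_le_mul hM1 hM2 (by linarith) hMpos.le)
          (mul_pos hmpos hmpos)
          (mul_le_mul h3 h4 hmpos.le (by linarith))
      have hrge : (m * m) / (M * M) ≤ r := by
        rw [hr]
        exact div_le_div₀ (mul_pos (by linarith : (0:ℝ) < qy - ξ) (by linarith : (0:ℝ) < η - px)).le
          (mul_le_mul h1 h2 hmpos.le (by linarith))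
          (mul_pos (by linarith : (0:ℝ) < px - ξ) (by linarith : (0:ℝ) < η - qy))
          (mul_le_mul hM3 hM4 (by linarith) hMpos.le)
      have hKpos : 0 < (M * M) / (m * m) :=
        div_pos (mul_pos hMpos hMpos) (mul_pos hmpos hmpos)
      have habs : |Real.log r| ≤ Real.log ((M * M) / (m * m)) := by
        rw [abs_le]
        constructor
        · have : Real.log ((m * m) / (M * M)) ≤ Real.log r :=
            Real.log_le_log (div_pos (mul_pos hmpos hmpos) (mul_pos hMpos hMpos)) hrge
          have hinv : (m * m) / (M * M) = ((M * M) / (m * m))⁻¹ := by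
            rw [inv_div]
          rw [hinv, Real.log_inv] at this
          linarith
        · exact Real.log_le_log hrpos hrle
      exact habs
    apply Summable.of_nonneg_of_le
      (fun i => mul_nonneg (hw i).le (abs_nonneg _))
      (fun i => mul_le_mul_of_nonneg_left (hbound i) (hw i).le)
      (hsum.mul_right _)
  -- Lower bound by the i0 term
  have hnonneg : ∀ n i, 0 ≤ w i * stripD (θi i) P x (y n) :=
    fun n i => mul_nonneg (hw i).le (abs_nonneg _)
  have hlower : ∀ n, w i0 * stripD (θi i0) P x (y n) ≤ ∑' i, w i * stripD (θi i) P x (y n) :=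
    fun n => Summable.le_tsum (hsummable n) i0 (fun j _ => hnonneg n j)
  -- The i0 term tends to infinity
  have hcont : Continuous (projDir (θi i0)) := by
    unfold projDir; fun_prop
  have hqlim : Filter.Tendsto (fun n => projDir (θi i0) (y n)) Filter.atTop
      (nhds (projDir (θi i0) v)) := (hcont.tendsto v).comp hyl
  have hvA : projDir (θi i0) v = projDir (θi i0) A := projDir_openSegment hv hABeq
  have hxstrict := strip_strict hPo hPb (θi i0) hx
  have hystrict : ∀ n, stripXi (θi i0) P < projDir (θi i0) (y n) ∧
      projDir (θi i0) (y n) < stripEta (θi i0) P :=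
    fun n => strip_strict hPo hPb (θi i0) (hyP n)
  have hmain : Filter.Tendsto (fun n => stripD (θi i0) P x (y n)) Filter.atTop Filter.atTop := by
    rcases hcase with hcase | hcase
    · have hql : Filter.Tendsto (fun n => projDir (θi i0) (y n)) Filter.atTop
          (nhds (stripXi (θi i0) P)) := by
        rw [hvA, hcase] at hqlim; exact hqlim
      exact tend_aux (fun n => projDir (θi i0) (y n)) hxstrict.1 hxstrict.2
        (fun n => (hystrict n).1) (fun n => (hystrict n).2) hql
    · have hql : Filter.Tendsto (fun n => projDir (θi i0) (y n)) Filter.atTop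
          (nhds (stripEta (θi i0) P)) := by
        rw [hvA, hcase] at hqlim; exact hqlim
      exact tend_aux' (fun n => projDir (θi i0) (y n)) hxstrict.1 hxstrict.2
        (fun n => (hystrict n).1) (fun n => (hystrict n).2) hql
  have hi0main : Filter.Tendsto (fun n => w i0 * stripD (θi i0) P x (y n)) Filter.atTop
      Filter.atTop := hmain.const_mul_atTop (hw i0)
  exact Filter.tendsto_atTop_mono hlower hi0main
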